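/- arXiv:2306.06422 — 4 statements merged into one kernel-verified Lean document; each statement's English description precedes it below -/
import Mathlib

section
/- Let A and B be finite abelian groups of orders n and m respectively, with m dividing n, and let f : A → B be perfect nonlinear (i.e., for every nonzero a ∈ A the map x ↦ f(x+a) − f(x) is balanced). For b ∈ B set k_b = |f⁻¹(b)|. Then ∑_{z∈B} k_z² = (n² + (m−1)n)/m, ∑_{z∈B} k_z k_{z+b} = n(n−1)/m for every nonzero b ∈ B, and ∑_{z∈B} k_z = n. -/
open Finset

/-- value-distribution equations for a perfect nonlinear map between
finite abelian groups. -/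
theorem stmt_0 (A B : Type*) [AddCommGroup A] [Fintype A] [DecidableEq A]
    [AddCommGroup B] [Fintype B] [DecidableEq B]
    (n m : ℕ) (hn : n = Fintype.card A) (hm : m = Fintype.card B) (hdvd : m ∣ n)
    (f : A → B)
    (hPN : ∀ a : A, a ≠ 0 → ∀ b : B,
      (univ.filter (fun x : A => f (x + a) - f x = b)).card = n / m)
    (k : B → ℕ) (hk : ∀ b : B, k b = (univ.filter (fun x : A => f x = b)).card) :
    (∑ z : B, (k z : ℚ) ^ 2 = ((n : ℚ) ^ 2 + ((m : ℚ) - 1) * n) / m) ∧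
    (∀ b : B, b ≠ 0 → ∑ z : B, (k z : ℚ) * (k (z + b) : ℚ) = (n : ℚ) * ((n : ℚ) - 1) / m) ∧
    (∑ z : B, k z = n) := by
  have hmpos : 0 < m := hm ▸ Fintype.card_pos
  have hnpos : 0 < n := hn ▸ Fintype.card_pos
  have hmQ : (m : ℚ) ≠ 0 := Nat.cast_ne_zero.mpr hmpos.ne'
  -- the key double counting identity
  have key : ∀ b : B, ∑ z : B, k z * k (z + b) =
      ∑ a : A, (univ.filter (fun x : A => f (x + a) - f x = b)).card := by
    intro b
    have h1 : (univ.filter (fun p : A × A => f p.2 - f p.1 = b)).card =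
        ∑ z : B, k z * k (z + b) := by
      rw [Finset.card_eq_sum_card_fiberwise
        (f := fun p : A × A => f p.1) (t := univ) (fun p _ => mem_univ _)]
      refine Finset.sum_congr rfl fun z _ => ?_
      have : (univ.filter (fun p : A × A => f p.2 - f p.1 = b)).filter
          (fun p => f p.1 = z) =
          (univ.filter (fun x : A => f x = z)) ×ˢ
            (univ.filter (fun x : A => f x = z + b)) := by
        ext p
        simp only [mem_filter, mem_univ, true_and, Finset.mem_product]
        constructor
        · rintro ⟨h1, h2⟩
          exact ⟨h2, by rw [← h2, ← h1]; abel⟩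
        · rintro ⟨h1, h2⟩
          exact ⟨by rw [h1, h2]; abel, h1⟩
      rw [this, Finset.card_product, hk, hk]
    have h2 : (univ.filter (fun p : A × A => f p.2 - f p.1 = b)).card =
        ∑ a : A, (univ.filter (fun x : A => f (x + a) - f x = b)).card := by
      rw [Finset.card_eq_sum_card_fiberwise
        (f := fun p : A × A => p.2 - p.1) (t := univ) (fun p _ => mem_univ _)]
      refine Finset.sum_congr rfl fun a _ => ?_
      refine Finset.card_bij (fun p _ => p.1) ?_ ?_ ?_
      · rintro p hp
        simp only [mem_filter, mem_univ, true_and] at hp ⊢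
        obtain ⟨h1, h2⟩ := hp
        have : p.2 = p.1 + a := by rw [← h2]; abel
        rw [← this]; exact h1
      · rintro p hp q hq h
        simp only [mem_filter, mem_univ, true_and] at hp hq
        have hp2 : p.2 = p.1 + a := by rw [← hp.2]; abel
        have hq2 : q.2 = q.1 + a := by rw [← hq.2]; abel
        have h' : p.1 = q.1 := h
        ext
        · exact h'
        · rw [hp2, hq2, h']
      · rintro x hx
        simp only [mem_filter, mem_univ, true_and] at hx
        exact ⟨(x, x + a), by simp [hx], rfl⟩
    rw [← h1, h2]
  -- evaluation of the RHS sum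
  have eval : ∀ b : B, ∑ a : A, (univ.filter (fun x : A => f (x + a) - f x = b)).card =
      (n - 1) * (n / m) + (if b = 0 then n else 0) := by
    intro b
    rw [← Finset.sum_erase_add _ _ (mem_univ (0 : A))]
    congr 1
    · rw [Finset.sum_congr rfl (fun a ha => hPN a (Finset.ne_of_mem_erase ha) b),
        Finset.sum_const, smul_eq_mul]
      congr 1
      rw [Finset.card_erase_of_mem (mem_univ _), Finset.card_univ, hn]
    · simp only [add_zero, sub_self]
      split_ifs with hb
      · subst hb
        simp [hn, Finset.filter_true_of_mem]
      · rw [Finset.filter_false_of_mem, Finset.card_empty]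
        intro x _
        exact fun h => hb h.symm
  have hndm : ((n / m : ℕ) : ℚ) = (n : ℚ) / m := Nat.cast_div hdvd hmQ
  refine ⟨?_, ?_, ?_⟩
  · have := key 0
    simp only [add_zero] at this
    have hcast : (∑ z : B, (k z : ℚ) ^ 2) = ((∑ z : B, k z * k z : ℕ) : ℚ) := by
      push_cast; simp [sq]
    rw [hcast, this, eval 0, if_pos rfl]
    push_cast [hndm, Nat.cast_sub (show 1 ≤ n from hnpos)]
    field_simp
    ring
  · intro b hb
    have hcast : (∑ z : B, (k z : ℚ) * (k (z + b) : ℚ)) =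
        ((∑ z : B, k z * k (z + b) : ℕ) : ℚ) := by push_cast; ring_nf
    rw [hcast, key b, eval b, if_neg hb]
    push_cast [hndm, Nat.cast_sub (show 1 ≤ n from hnpos)]
    field_simp
    ring
  · rw [hn, ← Finset.card_univ,
      Finset.card_eq_sum_card_fiberwise (f := f) (t := univ) (fun x _ => mem_univ _)]
    exact Finset.sum_congr rfl fun z _ => by simp [hk]
end

section
/- Let p be an odd prime and f : 𝔽_{p^m} → 𝔽_p a function. Then f is perfect nonlinear (every difference function D_a f(x) = f(x+a) − f(x), a ≠ 0, is balanced) if and only if f is bent, i.e., |W_f(a)| = p^{m/2} for all a ∈ 𝔽_{p^m}, where W_f(a) = ∑_{x∈𝔽_{p^m}} ξ_p^{f(x) + Tr(ax)}. -/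
open Finset

section Aux
variable {p : ℕ} [Fact p.Prime] {ξ : ℂ}

private lemma aux_pow_mod (hξ : IsPrimitiveRoot ξ p) (n : ℕ) : ξ ^ (n % p) = ξ ^ n := by
  conv_rhs => rw [← Nat.mod_add_div n p]
  rw [pow_add, pow_mul, hξ.pow_eq_one, one_pow, mul_one]

private lemma aux_e_add (hξ : IsPrimitiveRoot ξ p) (x y : ZMod p) :
    ξ ^ (x + y).val = ξ ^ x.val * ξ ^ y.val := by
  rw [ZMod.val_add, aux_pow_mod hξ, pow_add]

private lemma aux_sum_e (hξ : IsPrimitiveRoot ξ p) : ∑ b : ZMod p, ξ ^ b.val = 0 := by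
  have h1 : 1 < p := (Fact.out : p.Prime).one_lt
  have : NeZero p := ⟨(Fact.out : p.Prime).ne_zero⟩
  rw [← hξ.geom_sum_eq_zero h1]
  exact Finset.sum_nbij' (fun b => b.val) (fun i => (i : ZMod p))
    (fun b _ => mem_range.2 (ZMod.val_lt b)) (fun i _ => mem_univ _)
    (fun b _ => ZMod.natCast_rightInverse b)
    (fun i hi => ZMod.val_cast_of_lt (mem_range.1 hi)) (fun b _ => rfl)

private lemma aux_e_ne_one (hξ : IsPrimitiveRoot ξ p) {b : ZMod p} (hb : b ≠ 0) :
    ξ ^ b.val ≠ 1 := by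
  have : NeZero p := ⟨(Fact.out : p.Prime).ne_zero⟩
  exact hξ.pow_ne_one_of_pos_of_lt
    (fun h0 => hb (by rwa [ZMod.val_eq_zero] at h0)) (ZMod.val_lt b)

private lemma aux_conj (hξ : IsPrimitiveRoot ξ p) (v : ZMod p) :
    (starRingEnd ℂ) (ξ ^ v.val) = ξ ^ (-v).val := by
  have habs : ‖ξ ^ v.val‖ = 1 := by
    rw [norm_pow, Complex.norm_eq_one_of_pow_eq_one hξ.pow_eq_one (Fact.out : p.Prime).ne_zero,
      one_pow]
  rw [← Complex.inv_eq_conj habs]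
  refine inv_eq_of_mul_eq_one_left ?_
  rw [← aux_e_add hξ, neg_add_cancel, ZMod.val_zero, pow_zero]

private lemma aux_sum_zmod_eq_range (g : ZMod p → ℂ) :
    ∑ b : ZMod p, g b * ξ ^ b.val = ∑ i ∈ range p, g (i : ZMod p) * ξ ^ i := by
  have : NeZero p := ⟨(Fact.out : p.Prime).ne_zero⟩
  exact Finset.sum_nbij' (fun b => b.val) (fun i => (i : ZMod p))
    (fun b _ => mem_range.2 (ZMod.val_lt b)) (fun i _ => mem_univ _)
    (fun b _ => ZMod.natCast_rightInverse b)
    (fun i hi => ZMod.val_cast_of_lt (mem_range.1 hi))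
    (fun b _ => by rw [ZMod.natCast_rightInverse b])

private lemma aux_const (hξ : IsPrimitiveRoot ξ p) (c : ZMod p → ℕ)
    (h : ∑ b : ZMod p, (c b : ℂ) * ξ ^ b.val = 0) : ∀ b : ZMod p, c b = c 0 := by
  have hprime : p.Prime := Fact.out
  have : NeZero p := ⟨hprime.ne_zero⟩
  have hp0 : 0 < p := hprime.pos
  set Q : Polynomial ℚ := ∑ i ∈ range p, Polynomial.C ((c (i : ZMod p) : ℚ)) * Polynomial.X ^ i
    with hQdef
  have hcoeff : ∀ k, k < p → Q.coeff k = (c ((k : ZMod p)) : ℚ) := by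
    intro k hk
    rw [hQdef, Polynomial.finset_sum_coeff]
    simp only [Polynomial.coeff_C_mul, Polynomial.coeff_X_pow]
    rw [Finset.sum_eq_single k (fun i _ hik => by simp [Ne.symm hik]) (by simp [hk])]
    simp
  have hQeval : Polynomial.aeval ξ Q = 0 := by
    rw [hQdef, map_sum]
    simp only [map_mul, map_pow, Polynomial.aeval_C, Polynomial.aeval_X]
    rw [← h, aux_sum_zmod_eq_range]
    simp
  have hdvd : Polynomial.cyclotomic p ℚ ∣ Q := by
    rw [Polynomial.cyclotomic_eq_minpoly_rat hξ hp0]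
    exact minpoly.dvd ℚ ξ hQeval
  obtain ⟨R, hR⟩ := hdvd
  have hΦdeg : (Polynomial.cyclotomic p ℚ).natDegree = p - 1 := by
    rw [Polynomial.natDegree_cyclotomic, Nat.totient_prime hprime]
  have hΦne : Polynomial.cyclotomic p ℚ ≠ 0 := Polynomial.cyclotomic_ne_zero p ℚ
  have hΦcoeff : ∀ k, k < p → (Polynomial.cyclotomic p ℚ).coeff k = 1 := by
    intro k hk
    rw [Polynomial.cyclotomic_prime, Polynomial.finset_sum_coeff]
    simp only [Polynomial.coeff_X_pow]
    rw [Finset.sum_eq_single k (fun i _ hik => by simp [Ne.symm hik]) (by simp [hk])]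
    simp
  have key : ∀ b : ZMod p, (c b : ℚ) = (c 0 : ℚ) := by
    rcases eq_or_ne R 0 with hR0 | hR0
    · have hQ0 : Q = 0 := by rw [hR, hR0, mul_zero]
      intro b
      have h1 := hcoeff b.val (ZMod.val_lt b)
      have h2 := hcoeff 0 hp0
      rw [hQ0, Polynomial.coeff_zero, ZMod.natCast_rightInverse b] at h1
      rw [hQ0, Polynomial.coeff_zero, Nat.cast_zero] at h2
      rw [← h1, ← h2]
    · have hQdeg : Q.natDegree ≤ p - 1 := by
        refine Polynomial.natDegree_sum_le_of_forall_le _ _ (fun i hi => ?_)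
        exact le_trans (Polynomial.natDegree_C_mul_le _ _)
          (by simpa using Nat.le_sub_one_of_lt (mem_range.1 hi))
      have hRdeg : R.natDegree = 0 := by
        have := Polynomial.natDegree_mul hΦne hR0
        rw [← hR, hΦdeg] at this
        omega
      obtain ⟨r, rfl⟩ := Polynomial.natDegree_eq_zero.mp hRdeg
      have hcoeff' : ∀ k, k < p → Q.coeff k = r := by
        intro k hk
        rw [hR, Polynomial.coeff_mul_C, hΦcoeff k hk, one_mul]
      intro b
      have h1 := hcoeff b.val (ZMod.val_lt b)
      have h2 := hcoeff 0 hp0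
      rw [hcoeff' b.val (ZMod.val_lt b), ZMod.natCast_rightInverse b] at h1
      rw [hcoeff' 0 hp0, Nat.cast_zero] at h2
      rw [← h1, ← h2]
  intro b
  exact_mod_cast key b

end Aux

section Main

variable {p m : ℕ} [Fact p.Prime] {F : Type*} [Field F] [Fintype F] [DecidableEq F]
  [Algebra (ZMod p) F] {ξ : ℂ}

/-- orthogonality: sum of additive character over F vanishes for nonzero frequency -/
private lemma aux_orth (hξ : IsPrimitiveRoot ξ p) {w : F} (hw : w ≠ 0) :
    ∑ a : F, ξ ^ (Algebra.trace (ZMod p) F (a * w)).val = 0 := by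
  have : FiniteDimensional (ZMod p) F := Module.Finite.of_finite
  obtain ⟨c, hc⟩ := Algebra.trace_surjective (ZMod p) F 1
  set b : F := c * w⁻¹ with hbdef
  have hbw : Algebra.trace (ZMod p) F (b * w) = 1 := by
    rw [hbdef, mul_assoc, inv_mul_cancel₀ hw, mul_one, hc]
  set T : ℂ := ∑ a : F, ξ ^ (Algebra.trace (ZMod p) F (a * w)).val with hT
  have hshift : ξ ^ (Algebra.trace (ZMod p) F (b * w)).val * T = T := by
    rw [hT, Finset.mul_sum]
    calc ∑ a : F, ξ ^ (Algebra.trace (ZMod p) F (b * w)).val *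
          ξ ^ (Algebra.trace (ZMod p) F (a * w)).val
        = ∑ a : F, ξ ^ (Algebra.trace (ZMod p) F ((b + a) * w)).val := by
          refine Finset.sum_congr rfl fun a _ => ?_
          rw [← aux_e_add hξ, ← map_add, ← add_mul]
      _ = ∑ a : F, ξ ^ (Algebra.trace (ZMod p) F (a * w)).val :=
          Fintype.sum_equiv (Equiv.addLeft b) _ _ (fun a => rfl)
  have hne : ξ ^ (Algebra.trace (ZMod p) F (b * w)).val ≠ 1 := by
    rw [hbw]
    exact aux_e_ne_one hξ one_ne_zero
  have := sub_eq_zero.mpr hshift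
  rw [← sub_one_mul] at this
  rcases mul_eq_zero.mp this with h | h
  · exact absurd (sub_eq_zero.mp h) hne
  · exact h


private lemma aux_key (hξ : IsPrimitiveRoot ξ p) (f : F → ZMod p) (a : F) :
    (∑ x : F, ξ ^ (f x + Algebra.trace (ZMod p) F (a * x)).val) *
      (starRingEnd ℂ) (∑ x : F, ξ ^ (f x + Algebra.trace (ZMod p) F (a * x)).val) =
    ∑ u : F, ξ ^ (Algebra.trace (ZMod p) F (a * u)).val *
      ∑ y : F, ξ ^ (f (y + u) - f y).val := by
  have hterm : ∀ u y : F,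
      ξ ^ (Algebra.trace (ZMod p) F (a * u)).val * ξ ^ (f (y + u) - f y).val
        = ξ ^ (f (y + u) + Algebra.trace (ZMod p) F (a * (y + u))).val *
          (starRingEnd ℂ) (ξ ^ (f y + Algebra.trace (ZMod p) F (a * y)).val) := by
    intro u y
    rw [aux_conj hξ, ← aux_e_add hξ, ← aux_e_add hξ]
    congr 1
    rw [mul_add, map_add]
    ring
  symm
  calc ∑ u : F, ξ ^ (Algebra.trace (ZMod p) F (a * u)).val *
          ∑ y : F, ξ ^ (f (y + u) - f y).val
      = ∑ u : F, ∑ y : F, ξ ^ (Algebra.trace (ZMod p) F (a * u)).val *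
          ξ ^ (f (y + u) - f y).val := by
        exact sum_congr rfl fun u _ => Finset.mul_sum _ _ _
    _ = ∑ y : F, ∑ u : F, ξ ^ (Algebra.trace (ZMod p) F (a * u)).val *
          ξ ^ (f (y + u) - f y).val := Finset.sum_comm
    _ = ∑ y : F, ∑ x : F, ξ ^ (f x + Algebra.trace (ZMod p) F (a * x)).val *
          (starRingEnd ℂ) (ξ ^ (f y + Algebra.trace (ZMod p) F (a * y)).val) := by
        refine sum_congr rfl fun y _ => ?_
        exact Fintype.sum_equiv (Equiv.addLeft y) _ _ (fun u => hterm u y)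
    _ = ∑ x : F, ∑ y : F, ξ ^ (f x + Algebra.trace (ZMod p) F (a * x)).val *
          (starRingEnd ℂ) (ξ ^ (f y + Algebra.trace (ZMod p) F (a * y)).val) :=
        Finset.sum_comm
    _ = (∑ x : F, ξ ^ (f x + Algebra.trace (ZMod p) F (a * x)).val) *
          (starRingEnd ℂ) (∑ x : F, ξ ^ (f x + Algebra.trace (ZMod p) F (a * x)).val) := by
        rw [map_sum, Finset.sum_mul_sum]

private lemma aux_S_fiber (f : F → ZMod p) (u : F) :
    ∑ y : F, ξ ^ (f (y + u) - f y).val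
      = ∑ b : ZMod p,
          ((univ.filter (fun x : F => f (x + u) - f x = b)).card : ℂ) * ξ ^ b.val := by
  calc ∑ y : F, ξ ^ (f (y + u) - f y).val
      = ∑ b : ZMod p, ∑ _y ∈ univ.filter (fun y : F => f (y + u) - f y = b), ξ ^ b.val :=
        (Finset.sum_fiberwise' univ (fun y : F => f (y + u) - f y) (fun b => ξ ^ b.val)).symm
    _ = _ := sum_congr rfl fun b _ => by rw [Finset.sum_const, nsmul_eq_mul]

end Main

/-- For an odd prime `p` and `f : 𝔽_{p^m} → 𝔽_p`, perfect nonlinearity is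
equivalent to bentness: `|W_f(a)| = p^{m/2}` for all `a`, where
`W_f(a) = ∑_x ξ_p^{f(x) + Tr(ax)}`. -/
theorem stmt_2 (p m : ℕ) [Fact p.Prime] (hp : Odd p) (hm : 0 < m)
    (F : Type*) [Field F] [Fintype F] [DecidableEq F] [Algebra (ZMod p) F]
    (hF : Fintype.card F = p ^ m)
    (ξ : ℂ) (hξ : IsPrimitiveRoot ξ p)
    (f : F → ZMod p) :
    (∀ a : F, a ≠ 0 → ∀ b : ZMod p,
        (univ.filter (fun x : F => f (x + a) - f x = b)).card = p ^ (m - 1)) ↔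
    (∀ a : F, ‖∑ x : F,
        ξ ^ (f x + Algebra.trace (ZMod p) F (a * x)).val‖ = Real.sqrt (p ^ m)) := by
  have hprime : p.Prime := Fact.out
  set W : F → ℂ := fun a => ∑ x : F, ξ ^ (f x + Algebra.trace (ZMod p) F (a * x)).val with hWdef
  have hS0 : ∑ y : F, ξ ^ (f (y + 0) - f y).val = (Fintype.card F : ℂ) := by
    simp [Finset.card_univ]
  constructor
  · -- PN → bent
    intro hPN a
    have hSu : ∀ u : F, u ≠ 0 → (∑ y : F, ξ ^ (f (y + u) - f y).val) = 0 := by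
      intro u hu
      rw [aux_S_fiber]
      calc ∑ b : ZMod p,
            ((univ.filter (fun x : F => f (x + u) - f x = b)).card : ℂ) * ξ ^ b.val
          = ∑ b : ZMod p, ((p ^ (m - 1) : ℕ) : ℂ) * ξ ^ b.val :=
            sum_congr rfl fun b _ => by rw [hPN u hu b]
        _ = ((p ^ (m - 1) : ℕ) : ℂ) * ∑ b : ZMod p, ξ ^ b.val := by rw [Finset.mul_sum]
        _ = 0 := by rw [aux_sum_e hξ, mul_zero]
    have hprod : W a * (starRingEnd ℂ) (W a) = ((p ^ m : ℕ) : ℂ) := by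
      rw [hWdef]
      rw [aux_key hξ f a]
      rw [Finset.sum_eq_single 0 (fun u _ hu => by rw [hSu u hu, mul_zero]) (by simp)]
      rw [hS0, hF]
      simp
    have hnormSq : Complex.normSq (W a) = ((p ^ m : ℕ) : ℝ) := by
      have := hprod
      rw [Complex.mul_conj] at this
      exact_mod_cast this
    show ‖W a‖ = _
    rw [Complex.norm_def, hnormSq]
    norm_num
  · -- bent → PN
    intro hB a ha b
    have hcardF : (Fintype.card F : ℂ) ≠ 0 := by
      exact_mod_cast Fintype.card_ne_zero
    have hNS : ∀ c : F, W c * (starRingEnd ℂ) (W c) = ((p : ℝ) ^ m : ℂ) := by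
      intro c
      have h1 : Complex.normSq (W c) = (p : ℝ) ^ m := by
        rw [← Complex.sq_norm]
        rw [show ‖W c‖ = Real.sqrt ((p : ℝ) ^ m) from hB c]
        rw [Real.sq_sqrt (by positivity)]
      rw [Complex.mul_conj, h1]
      push_cast
      ring
    have hway1 : ∑ c : F, (W c * (starRingEnd ℂ) (W c)) *
        ξ ^ (Algebra.trace (ZMod p) F (c * (-a))).val = 0 := by
      calc ∑ c : F, (W c * (starRingEnd ℂ) (W c)) *
            ξ ^ (Algebra.trace (ZMod p) F (c * (-a))).val
          = ∑ c : F, ((p : ℝ) ^ m : ℂ) * ξ ^ (Algebra.trace (ZMod p) F (c * (-a))).val :=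
            sum_congr rfl fun c _ => by rw [hNS c]
        _ = ((p : ℝ) ^ m : ℂ) * ∑ c : F, ξ ^ (Algebra.trace (ZMod p) F (c * (-a))).val := by
            rw [Finset.mul_sum]
        _ = 0 := by rw [aux_orth hξ (neg_ne_zero.2 ha), mul_zero]
    have hway2 : ∑ c : F, (W c * (starRingEnd ℂ) (W c)) *
        ξ ^ (Algebra.trace (ZMod p) F (c * (-a))).val
        = (Fintype.card F : ℂ) * ∑ y : F, ξ ^ (f (y + a) - f y).val := by
      calc ∑ c : F, (W c * (starRingEnd ℂ) (W c)) *
            ξ ^ (Algebra.trace (ZMod p) F (c * (-a))).val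
          = ∑ c : F, (∑ u : F, ξ ^ (Algebra.trace (ZMod p) F (c * u)).val *
              ∑ y : F, ξ ^ (f (y + u) - f y).val) *
              ξ ^ (Algebra.trace (ZMod p) F (c * (-a))).val :=
            sum_congr rfl fun c _ => by rw [hWdef, aux_key hξ f c]
        _ = ∑ c : F, ∑ u : F, (ξ ^ (Algebra.trace (ZMod p) F (c * u)).val *
              ∑ y : F, ξ ^ (f (y + u) - f y).val) *
              ξ ^ (Algebra.trace (ZMod p) F (c * (-a))).val := by
            exact sum_congr rfl fun c _ => Finset.sum_mul _ _ _
        _ = ∑ u : F, ∑ c : F, (ξ ^ (Algebra.trace (ZMod p) F (c * u)).val *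
              ∑ y : F, ξ ^ (f (y + u) - f y).val) *
              ξ ^ (Algebra.trace (ZMod p) F (c * (-a))).val := Finset.sum_comm
        _ = ∑ u : F, ∑ c : F, ξ ^ (Algebra.trace (ZMod p) F (c * (u - a))).val *
              ∑ y : F, ξ ^ (f (y + u) - f y).val := by
            refine sum_congr rfl fun u _ => sum_congr rfl fun c _ => ?_
            rw [mul_right_comm]
            congr 1
            rw [← aux_e_add hξ, ← map_add, ← mul_add, sub_eq_add_neg]
        _ = ∑ u : F, (∑ c : F, ξ ^ (Algebra.trace (ZMod p) F (c * (u - a))).val) *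
              ∑ y : F, ξ ^ (f (y + u) - f y).val := by
            exact sum_congr rfl fun u _ => (Finset.sum_mul _ _ _).symm
        _ = (∑ c : F, ξ ^ (Algebra.trace (ZMod p) F (c * (a - a))).val) *
              ∑ y : F, ξ ^ (f (y + a) - f y).val := by
            refine Finset.sum_eq_single a (fun u _ hua => ?_) (by simp)
            rw [aux_orth hξ (sub_ne_zero.2 hua), zero_mul]
        _ = (Fintype.card F : ℂ) * ∑ y : F, ξ ^ (f (y + a) - f y).val := by
            rw [sub_self]
            congr 1
            simp [Finset.card_univ]
    have hSa : ∑ y : F, ξ ^ (f (y + a) - f y).val = 0 := by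
      have := hway1
      rw [hway2] at this
      exact (mul_eq_zero.mp this).resolve_left hcardF
    rw [aux_S_fiber f a] at hSa
    have hconst := aux_const hξ
      (fun b => (univ.filter (fun x : F => f (x + a) - f x = b)).card) hSa
    have hsum : ∑ b : ZMod p,
        (univ.filter (fun x : F => f (x + a) - f x = b)).card = p ^ m := by
      rw [← hF, Fintype.card, Finset.card_eq_sum_card_fiberwise
        (f := fun x : F => f (x + a) - f x) (t := univ) (fun x _ => mem_univ _)]
    have hN0 : p * (univ.filter (fun x : F => f (x + a) - f x = 0)).card = p ^ m := by
      calc p * (univ.filter (fun x : F => f (x + a) - f x = 0)).card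
          = ∑ _b : ZMod p, (univ.filter (fun x : F => f (x + a) - f x = 0)).card := by
            rw [Finset.sum_const, Finset.card_univ, ZMod.card, smul_eq_mul]
        _ = ∑ b : ZMod p, (univ.filter (fun x : F => f (x + a) - f x = b)).card :=
            sum_congr rfl fun b _ => (hconst b).symm
        _ = p ^ m := hsum
    have hN0' : (univ.filter (fun x : F => f (x + a) - f x = 0)).card = p ^ (m - 1) := by
      have hpm : p ^ m = p * p ^ (m - 1) := by
        conv_lhs => rw [show m = (m - 1) + 1 by omega]
        rw [pow_succ]
        ring
      rw [hpm] at hN0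
      exact Nat.eq_of_mul_eq_mul_left hprime.pos hN0
    exact (hconst b).trans hN0'
end

section
/- Let p be an odd prime, m even, and f : 𝔽_{p^m} → 𝔽_p a bent function. Then there exists s ∈ {0, …, p−1} and a sign ε ∈ {±1} such that |f⁻¹(s)| = p^{m−1} + ε(p−1)p^{m/2−1} and |f⁻¹(i)| = p^{m−1} − ε p^{m/2−1} for all i ≠ s. -/
open Finset Polynomial

noncomputable section BentAux

variable {p : ℕ} [hpf : Fact p.Prime]

/-- The ring `ℤ[X]/(Φ_p)`. -/
def Bq (p : ℕ) := Polynomial ℤ ⧸ (Ideal.span {Polynomial.cyclotomic p ℤ})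

instance : CommRing (Bq p) := Ideal.Quotient.commRing _

def mkB (p : ℕ) : Polynomial ℤ →+* Bq p := Ideal.Quotient.mk _

omit hpf in
lemma mkB_surjective : Function.Surjective (mkB p) := Ideal.Quotient.mk_surjective

lemma aeval_cyc_eq_zero {z : ℂ} (hz : IsPrimitiveRoot z p) : aeval z (cyclotomic p ℤ) = 0 := by
  have hne : NeZero p := ⟨hpf.out.ne_zero⟩
  have := (Polynomial.isRoot_cyclotomic_iff (R := ℂ) (n := p)).mpr hz
  rw [IsRoot.def] at this
  rw [aeval_def, ← eval_map, Polynomial.map_cyclotomic, this]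

variable {ξ : ℂ}

lemma cyc_dvd (hξ : IsPrimitiveRoot ξ p) (R : Polynomial ℤ) (h : aeval ξ R = 0) :
    cyclotomic p ℤ ∣ R := by
  have h1 : minpoly ℚ ξ ∣ R.map (algebraMap ℤ ℚ) := by
    apply minpoly.dvd
    rw [aeval_map_algebraMap, h]
  rw [← Polynomial.cyclotomic_eq_minpoly_rat hξ hpf.out.pos] at h1
  have h2 : (cyclotomic p ℤ).map (algebraMap ℤ ℚ) ∣ R.map (algebraMap ℤ ℚ) := by
    rwa [Polynomial.map_cyclotomic]
  exact (Polynomial.map_dvd_map _ (algebraMap ℤ ℚ).injective_int (cyclotomic.monic p ℤ)).mp h2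

lemma aeval_prim (hξ : IsPrimitiveRoot ξ p) (R : Polynomial ℤ) (h : aeval ξ R = 0) {z : ℂ}
    (hz : IsPrimitiveRoot z p) : aeval z R = 0 := by
  obtain ⟨S, rfl⟩ := cyc_dvd hξ R h
  rw [map_mul, aeval_cyc_eq_zero hz, zero_mul]

lemma conj_prim {z : ℂ} (hz : IsPrimitiveRoot z p) : (starRingEnd ℂ) z = z ^ (p - 1) := by
  have hz1 : z ^ p = 1 := hz.pow_eq_one
  have hzne : z ≠ 0 := fun h0 => by simp [h0, zero_pow hpf.out.ne_zero] at hz1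
  have habs : z * (starRingEnd ℂ) z = 1 := by
    have : ‖z‖ = 1 := Complex.norm_eq_one_of_pow_eq_one hz1 hpf.out.ne_zero
    rw [Complex.mul_conj, Complex.normSq_eq_norm_sq, this]; norm_num
  have h4 : z * z ^ (p - 1) = 1 := by
    rw [← pow_succ', Nat.sub_add_cancel hpf.out.one_lt.le, hz1]
  rw [← h4] at habs
  exact (mul_left_cancel₀ hzne habs)

/-- Evaluation `Bq p → ℂ` at `ξ`. -/
def evB (hξ : IsPrimitiveRoot ξ p) : Bq p →+* ℂ :=
  Ideal.Quotient.lift _ (aeval ξ).toRingHom (by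
    intro R hR
    rw [Ideal.mem_span_singleton] at hR
    obtain ⟨S, rfl⟩ := hR
    simp [aeval_cyc_eq_zero hξ])

@[simp] lemma evB_mk (hξ : IsPrimitiveRoot ξ p) (R : Polynomial ℤ) :
    evB hξ (mkB p R) = aeval ξ R := rfl

lemma evB_injective (hξ : IsPrimitiveRoot ξ p) : Function.Injective (evB hξ) := by
  rw [injective_iff_map_eq_zero]
  intro a ha
  obtain ⟨R, rfl⟩ := mkB_surjective a
  rw [evB_mk] at ha
  have := cyc_dvd hξ R ha
  rw [show (0 : Bq p) = mkB p 0 from (map_zero _).symm]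
  apply Ideal.Quotient.eq.mpr
  simpa [Ideal.mem_span_singleton] using this


lemma one_sub_pow_eq {R : Type*} [CommRing R] (x : R) (n : ℕ) :
    1 - x ^ n = (1 - x) * ∑ i ∈ range n, x ^ i := by
  linear_combination geom_sum_mul x n

/-- root of unity `exp(2πi/p)` -/
lemma exists_prim : ∃ z : ℂ, IsPrimitiveRoot z p :=
  ⟨_, Complex.isPrimitiveRoot_exp p hpf.out.ne_zero⟩

/-- Conjugation on `Bq p`, induced by `X ↦ X^(p-1)`. -/
def cB (p : ℕ) [Fact p.Prime] : Bq p →+* Bq p :=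
  Ideal.Quotient.lift _ (eval₂RingHom ((mkB p).comp Polynomial.C) (mkB p (X ^ (p-1)))) (by
    obtain ⟨z, hz⟩ := (exists_prim (p := p))
    intro R hR
    rw [Ideal.mem_span_singleton] at hR
    obtain ⟨S, rfl⟩ := hR
    rw [coe_eval₂RingHom, eval₂_mul]
    have h1 : eval₂ ((mkB p).comp Polynomial.C) (mkB p (X ^ (p-1))) (cyclotomic p ℤ) = 0 := by
      rw [← Polynomial.hom_eval₂]
      have : eval₂ Polynomial.C (X ^ (p-1) : Polynomial ℤ) (cyclotomic p ℤ)
          = (cyclotomic p ℤ).comp (X ^ (p-1)) := rfl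
      rw [this]
      have hdvd : cyclotomic p ℤ ∣ (cyclotomic p ℤ).comp (X ^ (p-1)) := by
        apply cyc_dvd hz
        rw [aeval_comp]
        have : aeval z ((X : Polynomial ℤ) ^ (p-1)) = z ^ (p-1) := by simp
        rw [this]
        exact aeval_cyc_eq_zero (hz.pow_of_coprime _ (by
          obtain ⟨r, hr⟩ : ∃ r, p = r + 1 := ⟨p - 1, by have := (Fact.out (p := Nat.Prime p)).one_lt; omega⟩
          subst hr
          simpa using (Nat.coprime_succ_self_right (n := r)).symm.symm))
      obtain ⟨T, hT⟩ := hdvd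
      rw [hT, map_mul]
      have : mkB p (cyclotomic p ℤ) = 0 := by
        apply Ideal.Quotient.eq_zero_iff_mem.mpr
        exact Ideal.subset_span rfl
      rw [this, zero_mul]
    rw [h1, zero_mul])

lemma cB_mk (R : Polynomial ℤ) : cB p (mkB p R) = mkB p (R.comp (X ^ (p-1))) := by
  show eval₂ ((mkB p).comp Polynomial.C) (mkB p (X ^ (p-1))) R = _
  rw [← Polynomial.hom_eval₂]
  rfl

lemma evB_cB (hξ : IsPrimitiveRoot ξ p) (b : Bq p) :
    evB hξ (cB p b) = (starRingEnd ℂ) (evB hξ b) := by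
  obtain ⟨R, rfl⟩ := mkB_surjective b
  rw [cB_mk, evB_mk, evB_mk, aeval_comp]
  have h1 : aeval ξ ((X : Polynomial ℤ) ^ (p-1)) = ξ ^ (p-1) := by simp
  rw [h1, ← conj_prim hξ]
  exact Polynomial.aeval_algHom_apply ((starRingEnd ℂ).toIntAlgHom) ξ R

lemma cB_cB (b : Bq p) : cB p (cB p b) = b := by
  obtain ⟨z, hz⟩ := (exists_prim (p := p))
  apply evB_injective hz
  rw [evB_cB hz, evB_cB hz, Complex.conj_conj]

instance : IsDomain (Bq p) := by
  obtain ⟨z, hz⟩ := (exists_prim (p := p))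
  exact Function.Injective.isDomain (evB hz) (evB_injective hz)

/-- `π = 1 - X` in `Bq p`. -/
def piB (p : ℕ) : Bq p := mkB p (1 - X)

lemma piB_ne_zero : piB p ≠ 0 := by
  obtain ⟨z, hz⟩ := (exists_prim (p := p))
  intro h
  have := congrArg (evB hz) h
  rw [piB, evB_mk, map_zero, map_sub, aeval_X, map_one, sub_eq_zero] at this
  exact hz.ne_one hpf.out.one_lt this.symm

lemma geom_unit {t : ℕ} (ht : ¬ (p ∣ t)) :
    IsUnit (mkB p (∑ i ∈ range t, X ^ i)) ∧
      mkB p (1 - X ^ t) = piB p * mkB p (∑ i ∈ range t, X ^ i) := by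
  have hXp : mkB p ((X : Polynomial ℤ) ^ p) = 1 := by
    obtain ⟨z, hz⟩ := (exists_prim (p := p))
    have : cyclotomic p ℤ ∣ (X ^ p - 1) := by
      apply cyc_dvd hz
      simp [hz.pow_eq_one]
    obtain ⟨T, hT⟩ := this
    have h0 : mkB p (X ^ p - 1) = 0 := by
      rw [hT, map_mul, show mkB p (cyclotomic p ℤ) = 0 from
        Ideal.Quotient.eq_zero_iff_mem.mpr (Ideal.subset_span rfl), zero_mul]
    have := sub_eq_zero.mp (by rw [← map_sub]; exact h0 : mkB p (X^p) - mkB p 1 = 0)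
    simpa using this
  have hfact : mkB p (1 - X ^ t) = piB p * mkB p (∑ i ∈ range t, X ^ i) := by
    rw [piB, ← map_mul, ← one_sub_pow_eq]
  refine ⟨?_, hfact⟩
  -- find inverse exponent
  have hco : Nat.Coprime t p := Nat.Coprime.symm ((Nat.Prime.coprime_iff_not_dvd hpf.out).mpr ht)
  obtain ⟨t', -, ht'⟩ := Nat.exists_mul_mod_eq_one_of_coprime hco hpf.out.one_lt
  -- t * t' = p * k + 1
  have hdecomp : t * t' = p * (t * t' / p) + 1 := by
    conv_lhs => rw [← Nat.div_add_mod (t * t') p]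
    rw [ht']
  have hXtt' : mkB p ((X : Polynomial ℤ) ^ (t * t')) = mkB p X := by
    rw [hdecomp, pow_succ, pow_mul, map_mul, map_pow, hXp, one_pow, one_mul]
  -- 1 - X^{t t'} = (1 - X^t) * geom
  have hkey : mkB p (1 - X) = mkB p (1 - X ^ t) * mkB p (∑ i ∈ range t', (X ^ t) ^ i) := by
    rw [← map_mul, ← one_sub_pow_eq, ← pow_mul]
    rw [map_sub, map_sub, map_one, hXtt']
  rw [hfact] at hkey
  have hcancel : mkB p (∑ i ∈ range t, X ^ i) * mkB p (∑ i ∈ range t', (X ^ t) ^ i) = 1 := by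
    have h2 : piB p * (mkB p (∑ i ∈ range t, X ^ i) * mkB p (∑ i ∈ range t', (X ^ t) ^ i))
        = piB p * 1 := by
      rw [mul_one, ← mul_assoc, ← hkey, piB]
    exact mul_left_cancel₀ piB_ne_zero h2
  exact IsUnit.of_mul_eq_one _ hcancel


/-- reduction map `Bq p → ZMod p`, `X ↦ 1`. -/
def psiB (p : ℕ) [Fact p.Prime] : Bq p →+* ZMod p :=
  Ideal.Quotient.lift _ ((Int.castRingHom (ZMod p)).comp (evalRingHom (1 : ℤ))) (by
    intro R hR
    rw [Ideal.mem_span_singleton] at hR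
    obtain ⟨S, rfl⟩ := hR
    simp [Polynomial.eval_one_cyclotomic_prime])

lemma psiB_mk (R : Polynomial ℤ) : psiB p (mkB p R) = ((R.eval 1 : ℤ) : ZMod p) := rfl

lemma p_mem_span_piB : (p : Bq p) ∈ Ideal.span {piB p} := by
  have hroot : IsRoot (Polynomial.C (p : ℤ) - cyclotomic p ℤ) 1 := by
    simp [IsRoot.def, Polynomial.eval_one_cyclotomic_prime]
  obtain ⟨T, hT⟩ := (dvd_iff_isRoot).mpr hroot
  have h1 : (p : Bq p) = mkB p (Polynomial.C (p : ℤ)) := by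
    rw [Polynomial.C_eq_natCast, map_natCast]
  have h2 : mkB p (Polynomial.C (p : ℤ) - cyclotomic p ℤ) = mkB p (Polynomial.C (p : ℤ)) := by
    rw [map_sub, show mkB p (cyclotomic p ℤ) = 0 from
      Ideal.Quotient.eq_zero_iff_mem.mpr (Ideal.subset_span rfl), sub_zero]
  rw [h1, ← h2, hT, map_mul]
  have h3 : mkB p (X - Polynomial.C 1) = -piB p := by
    rw [piB, ← map_neg]; congr 1; rw [Polynomial.C_1]; ring
  rw [h3]
  exact Ideal.mul_mem_right _ _ (neg_mem (Ideal.subset_span rfl))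

lemma ker_psiB : RingHom.ker (psiB p) = Ideal.span {piB p} := by
  apply le_antisymm
  · intro b hb
    obtain ⟨R, rfl⟩ := mkB_surjective b
    rw [RingHom.mem_ker, psiB_mk, ZMod.intCast_zmod_eq_zero_iff_dvd] at hb
    obtain ⟨k, hk⟩ := hb
    have hroot : IsRoot (R - Polynomial.C (R.eval 1)) 1 := by simp [IsRoot.def]
    obtain ⟨S, hS⟩ := (dvd_iff_isRoot).mpr hroot
    have : mkB p R = mkB p (X - Polynomial.C 1) * mkB p S + (p : Bq p) * (k : Bq p) := by
      have h1 : R = (X - Polynomial.C 1) * S + Polynomial.C (R.eval 1) := by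
        linear_combination hS
      rw [h1, map_add, map_mul]
      congr 1
      rw [hk]
      push_cast
      simp only [map_intCast, map_natCast, map_mul, Polynomial.C_eq_intCast, Polynomial.C_eq_natCast,
        Polynomial.C_mul, eq_intCast]
      exact congrArg _ (map_intCast (mkB p) k)
    rw [this]
    apply Ideal.add_mem
    · have h3 : mkB p (X - Polynomial.C 1) = -piB p := by
        rw [piB, ← map_neg]; congr 1; rw [Polynomial.C_1]; ring
      rw [h3]
      exact Ideal.mul_mem_right _ _ (neg_mem (Ideal.subset_span rfl))
    · exact Ideal.mul_mem_right _ _ p_mem_span_piB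
  · rw [Ideal.span_le]
    intro b hb
    rw [Set.mem_singleton_iff] at hb
    subst hb
    rw [SetLike.mem_coe, RingHom.mem_ker, piB, psiB_mk]
    simp

lemma psiB_surjective : Function.Surjective (psiB p) := by
  intro z
  refine ⟨mkB p (Polynomial.C (z.val : ℤ)), ?_⟩
  rw [psiB_mk, Polynomial.eval_C, Int.cast_natCast]
  exact ZMod.natCast_rightInverse z

lemma prime_piB : Prime (piB p) := by
  have hmax : (Ideal.span {piB p}).IsMaximal := by
    rw [← ker_psiB]
    exact RingHom.ker_isMaximal_of_surjective _ psiB_surjective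
  exact (Ideal.span_singleton_prime piB_ne_zero).mp hmax.isPrime

lemma p_eq_unit_mul_piB_pow : ∃ u : Bq p, IsUnit u ∧ (p : Bq p) = piB p ^ (p - 1) * u := by
  obtain ⟨z, hz⟩ := (exists_prim (p := p))
  have key : ∀ μ : ℂ, ∃ b : Bq p,
      μ ∈ primitiveRoots p ℂ → IsUnit b ∧ evB hz (piB p * b) = 1 - μ := by
    intro μ
    by_cases hμ : μ ∈ primitiveRoots p ℂ
    · have hμp : IsPrimitiveRoot μ p := (mem_primitiveRoots hpf.out.pos).mp hμ
      obtain ⟨i, hip, hiμ⟩ := hz.eq_pow_of_pow_eq_one hμp.pow_eq_one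
      have hine : ¬ (p ∣ i) := by
        intro hdvd
        rcases Nat.eq_zero_of_dvd_of_lt hdvd hip with h0
        rw [h0, pow_zero] at hiμ
        exact hμp.ne_one hpf.out.one_lt hiμ.symm
      obtain ⟨hu, hfact⟩ := geom_unit (p := p) hine
      refine ⟨mkB p (∑ j ∈ range i, X ^ j), fun _ => ⟨hu, ?_⟩⟩
      rw [← hfact, evB_mk]
      simp [hiμ]
    · exact ⟨1, fun h => absurd h hμ⟩
  choose bfun hb using key
  refine ⟨∏ μ ∈ primitiveRoots p ℂ, bfun μ, ?_, ?_⟩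
  · apply Finset.prod_induction _ IsUnit
    · exact fun _ _ => IsUnit.mul
    · exact isUnit_one
    · exact fun μ hμ => (hb μ hμ).1
  · apply evB_injective hz
    rw [map_natCast]
    have hcard : (primitiveRoots p ℂ).card = p - 1 := by
      rw [hz.card_primitiveRoots, Nat.totient_prime hpf.out]
    have hprod : evB hz (piB p ^ (p - 1) * ∏ μ ∈ primitiveRoots p ℂ, bfun μ)
        = ∏ μ ∈ primitiveRoots p ℂ, evB hz (piB p * bfun μ) := by
      rw [Finset.prod_congr rfl (fun μ hμ => map_mul (evB hz) (piB p) (bfun μ))]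
      rw [Finset.prod_mul_distrib, Finset.prod_const, hcard, map_mul, map_pow, map_prod]
    rw [hprod, Finset.prod_congr rfl (fun μ hμ => (hb μ hμ).2)]
    -- p = ∏ (1 - μ)
    have := Polynomial.eval_one_cyclotomic_prime (R := ℂ) (p := p)
    rw [Polynomial.cyclotomic_eq_prod_X_sub_primitiveRoots hz, Polynomial.eval_prod] at this
    rw [← this]
    apply Finset.prod_congr rfl
    intro μ hμ
    simp


lemma pB_ne_zero : (p : Bq p) ≠ 0 := by
  obtain ⟨z, hz⟩ := (exists_prim (p := p))
  intro h
  have := congrArg (evB hz) h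
  rw [map_natCast, map_zero] at this
  exact (Nat.cast_ne_zero (R := ℂ)).mpr hpf.out.ne_zero this

lemma cB_piB : ∃ g : Bq p, IsUnit g ∧ cB p (piB p) = piB p * g := by
  have hne : ¬ (p ∣ p - 1) := by
    have h1 := hpf.out.one_lt
    intro h
    rcases Nat.eq_zero_of_dvd_of_lt h (by omega) with h0
    omega
  obtain ⟨hu, hfact⟩ := geom_unit (p := p) hne
  refine ⟨mkB p (∑ i ∈ range (p-1), X ^ i), hu, ?_⟩
  have h1 : cB p (piB p) = mkB p (1 - X ^ (p-1)) := by
    rw [piB, cB_mk]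
    congr 1
    simp [sub_comp]
  rw [h1, hfact]

lemma key_div (q : ℕ) (hq : 0 < q) (x : Bq p) (hx : x * cB p x = (p : Bq p) ^ (2 * q)) :
    ∃ w : Bq p, x = (p : Bq p) ^ q * w ∧ w * cB p w = 1 := by
  classical
  obtain ⟨u, hu, hpu⟩ := p_eq_unit_mul_piB_pow (p := p)
  obtain ⟨g, hg, hcπ⟩ := cB_piB (p := p)
  have hπ : Prime (piB p) := prime_piB
  set π := piB p with hπdef
  set N := (p - 1) * (2 * q) with hN
  have hxcx : x * cB p x = π ^ N * u ^ (2 * q) := by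
    rw [hx, hpu, mul_pow, ← pow_mul]
  have hbound : ∀ k, N < k → ¬ π ^ k ∣ x := by
    intro k hk hdvd
    have h1 : π ^ (N + 1) ∣ x := dvd_trans (pow_dvd_pow π (by omega)) hdvd
    have h2 : π ^ (N + 1) ∣ π ^ N * u ^ (2 * q) := by
      rw [← hxcx]; exact h1.mul_right _
    obtain ⟨r, hr⟩ := h2
    have h3 : π ^ N * u ^ (2 * q) = π ^ N * (π * r) := by
      rw [hr, pow_succ]; ring
    have h4 : u ^ (2 * q) = π * r := mul_left_cancel₀ (pow_ne_zero N hπ.ne_zero) h3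
    exact hπ.not_unit (isUnit_of_dvd_unit ⟨r, h4⟩ (hu.pow _))
  set P : ℕ → Prop := fun k => π ^ k ∣ x with hP
  set a := Nat.findGreatest P N with ha
  have haP : P a := Nat.findGreatest_spec (Nat.zero_le N) (by simp [hP])
  have haN : ¬ P (a + 1) := by
    by_cases hle : a + 1 ≤ N
    · exact Nat.findGreatest_is_greatest (Nat.lt_succ_self a) hle
    · exact hbound _ (by omega)
  obtain ⟨x', hx'⟩ := haP
  have hπx' : ¬ π ∣ x' := by
    rintro ⟨t, ht⟩
    exact haN ⟨t, by rw [hx', ht, pow_succ]; ring⟩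
  have hcx : cB p x = π ^ a * (g ^ a * cB p x') := by
    rw [hx', map_mul, map_pow, hcπ, mul_pow]; ring
  have hπcx' : ¬ π ∣ cB p x' := by
    rintro ⟨t, ht⟩
    apply hπx'
    have h5 : cB p (cB p x') = cB p π * cB p t := by rw [ht, map_mul]
    rw [cB_cB, hcπ] at h5
    exact ⟨g * cB p t, by rw [h5]; ring⟩
  set W := x' * (g ^ a * cB p x') with hW
  have hkey : π ^ (2 * a) * W = π ^ N * u ^ (2 * q) := by
    have h6 : π ^ (2 * a) * W = x * cB p x := by
      rw [hcx, hx', hW, two_mul, pow_add]; ring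
    rw [h6, hxcx]
  have hπW : ¬ π ∣ W := by
    intro hdvd
    rcases hπ.dvd_mul.mp hdvd with h | h
    · exact hπx' h
    · rcases hπ.dvd_mul.mp h with h' | h'
      · exact hπ.not_unit (isUnit_of_dvd_unit h' (hg.pow _))
      · exact hπcx' h'
  have h2a : 2 * a = N := by
    rcases lt_trichotomy (2 * a) N with hlt | heq | hgt
    · exfalso
      have : π ^ (2 * a) * W = π ^ (2 * a) * (π ^ (N - 2 * a) * u ^ (2 * q)) := by
        rw [hkey, ← mul_assoc, ← pow_add]
        congr 2
        omega
      have hWeq := mul_left_cancel₀ (pow_ne_zero _ hπ.ne_zero) this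
      apply hπW
      rw [hWeq]
      exact Dvd.dvd.mul_right (dvd_pow_self π (by omega)) _
    · exact heq
    · exfalso
      have : π ^ N * (π ^ (2 * a - N) * W) = π ^ N * u ^ (2 * q) := by
        rw [← hkey, ← mul_assoc, ← pow_add]
        congr 2
        omega
      have h7 := mul_left_cancel₀ (pow_ne_zero _ hπ.ne_zero) this
      have hiu : IsUnit (π ^ (2 * a - N) * W) := by rw [h7]; exact hu.pow _
      have hdvd : π ∣ π ^ (2 * a - N) * W :=
        Dvd.dvd.mul_right (dvd_pow_self π (by omega)) _
      exact hπ.not_unit (isUnit_of_dvd_unit hdvd hiu)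
  have haq : a = (p - 1) * q := by
    have : (p - 1) * (2 * q) = 2 * ((p - 1) * q) := by ring
    omega
  obtain ⟨uinv, hui⟩ := hu.exists_right_inv
  refine ⟨uinv ^ q * x', ?_, ?_⟩
  · rw [hpu, hx', haq]
    have hexp : (π ^ (p - 1) * u) ^ q * (uinv ^ q * x')
        = π ^ ((p - 1) * q) * x' * (u * uinv) ^ q := by
      rw [mul_pow, mul_pow, ← pow_mul]; ring
    rw [hexp, hui, one_pow, mul_one]
  · have hxeq : x = (p : Bq p) ^ q * (uinv ^ q * x') := by
      rw [hpu, hx', haq]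
      have hexp : (π ^ (p - 1) * u) ^ q * (uinv ^ q * x')
          = π ^ ((p - 1) * q) * x' * (u * uinv) ^ q := by
        rw [mul_pow, mul_pow, ← pow_mul]; ring
      rw [hexp, hui, one_pow, mul_one]
    set w := uinv ^ q * x' with hw
    have hcw : cB p x = (p : Bq p) ^ q * cB p w := by
      rw [hxeq, map_mul, map_pow, map_natCast]
    have hfin : (p : Bq p) ^ (2 * q) * (w * cB p w) = (p : Bq p) ^ (2 * q) * 1 := by
      rw [mul_one]
      calc (p : Bq p) ^ (2 * q) * (w * cB p w)
          = ((p : Bq p) ^ q * w) * ((p : Bq p) ^ q * cB p w) := by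
            rw [two_mul, pow_add]; ring
        _ = x * cB p x := by rw [← hxeq, ← hcw]
        _ = (p : Bq p) ^ (2 * q) := hx
    exact mul_left_cancel₀ (pow_ne_zero _ pB_ne_zero) hfin


open IntermediateField in
lemma unit_classify (hξ : IsPrimitiveRoot ξ p) (hodd : Odd p) (w : Bq p)
    (hw : w * cB p w = 1) :
    ∃ (s : ℕ) (ε : ℤ), (ε = 1 ∨ ε = -1) ∧ evB hξ w = (ε : ℂ) * ξ ^ s := by
  haveI : NeZero p := ⟨hpf.out.ne_zero⟩
  obtain ⟨Rw, hRw⟩ := mkB_surjective w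
  -- all conjugates of ω have modulus one
  have norm1 : ∀ z : ℂ, IsPrimitiveRoot z p →
      aeval z Rw * (starRingEnd ℂ) (aeval z Rw) = 1 := by
    intro z hz
    have h0 : mkB p (Rw * Rw.comp (X ^ (p - 1)) - 1) = 0 := by
      rw [map_sub, map_mul, map_one, ← cB_mk, hRw, hw, sub_self]
    have hdvd : cyclotomic p ℤ ∣ (Rw * Rw.comp (X ^ (p - 1)) - 1) := by
      rwa [← Ideal.mem_span_singleton, ← Ideal.Quotient.eq_zero_iff_mem]
    have h1 : aeval z (Rw * Rw.comp (X ^ (p - 1)) - 1) = 0 := by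
      obtain ⟨T, hT⟩ := hdvd
      rw [hT, map_mul, aeval_cyc_eq_zero hz, zero_mul]
    rw [map_sub, map_mul, map_one, sub_eq_zero, aeval_comp] at h1
    have h2 : aeval z ((X : Polynomial ℤ) ^ (p - 1)) = z ^ (p - 1) := by simp
    rw [h2, ← conj_prim hz] at h1
    have h3 : aeval ((starRingEnd ℂ) z) Rw = (starRingEnd ℂ) (aeval z Rw) :=
      Polynomial.aeval_algHom_apply ((starRingEnd ℂ).toIntAlgHom) z Rw
    rw [h3] at h1
    exact h1
  set ω : ℂ := evB hξ w with hω
  have hωeval : ω = aeval ξ Rw := by rw [hω, ← hRw, evB_mk]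
  -- the number field K = ℚ(ξ)
  have hξint : IsIntegral ℚ ξ := (hξ.isIntegral hpf.out.pos).tower_top
  set K := ℚ⟮ξ⟯ with hK
  haveI : FiniteDimensional ℚ K := IntermediateField.adjoin.finiteDimensional hξint
  haveI : NumberField K := ⟨⟩
  set ξK : K := ⟨ξ, IntermediateField.mem_adjoin_simple_self ℚ ξ⟩ with hξK
  have hξKprim : IsPrimitiveRoot ξK p := by
    apply IsPrimitiveRoot.of_map_of_injective (f := algebraMap K ℂ)
    · exact hξ
    · exact (algebraMap K ℂ).injective
  have hmemadj : ∀ R : Polynomial ℤ, aeval ξ R ∈ K := by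
    intro R
    have h3 : aeval ξ R = aeval ξ (R.map (algebraMap ℤ ℚ)) := by
      rw [aeval_map_algebraMap]
    rw [h3]
    apply IntermediateField.algebra_adjoin_le_adjoin ℚ {ξ}
    rw [Algebra.adjoin_singleton_eq_range_aeval]
    exact ⟨R.map (algebraMap ℤ ℚ), rfl⟩
  set ωK : K := ⟨ω, hωeval ▸ hmemadj Rw⟩ with hωK
  have hcoeω : algebraMap K ℂ ωK = ω := rfl
  have hωKeval : ωK = aeval ξK Rw := by
    apply (algebraMap K ℂ).injective
    rw [hcoeω, hωeval, ← Polynomial.aeval_algebraMap_apply]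
    rfl
  -- integrality of ωK
  have hωint : IsIntegral ℤ ωK := by
    rw [← isIntegral_algebraMap_iff (algebraMap K ℂ).injective, hcoeω, hωeval]
    have hadj : Algebra.adjoin ℤ ({ξ} : Set ℂ) ≤ integralClosure ℤ ℂ := by
      apply Algebra.adjoin_le
      intro y hy
      rw [Set.mem_singleton_iff] at hy
      subst hy
      exact hξ.isIntegral hpf.out.pos
    have : aeval ξ Rw ∈ Algebra.adjoin ℤ ({ξ} : Set ℂ) := by
      rw [Algebra.adjoin_singleton_eq_range_aeval]
      exact ⟨Rw, rfl⟩
    exact hadj this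
  -- Kronecker
  have hnorm : ∀ φ : K →+* ℂ, ‖φ ωK‖ = 1 := by
    intro φ
    have hφξ : IsPrimitiveRoot (φ ξK) p := by
      apply IsPrimitiveRoot.map_of_injective hξKprim (φ.injective)
    have hφω : φ ωK = aeval (φ ξK) Rw := by
      rw [hωKeval]
      have h := Polynomial.aeval_algHom_apply (φ.toIntAlgHom) ξK Rw
      simpa [RingHom.toIntAlgHom_coe] using h.symm
    rw [hφω]
    have := norm1 (φ ξK) hφξ
    rw [Complex.mul_conj] at this
    have h5 : Complex.normSq (aeval (φ ξK) Rw) = 1 := by exact_mod_cast this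
    rw [Complex.norm_def, h5, Real.sqrt_one]
  obtain ⟨n, hn0, hωn⟩ := NumberField.Embeddings.pow_eq_one_of_norm_eq_one K ℂ hωint hnorm
  -- order bound in K
  have LK : ∀ (η : K) (nn : ℕ), 0 < nn → IsPrimitiveRoot η nn → nn.totient ≤ p - 1 := by
    intro η nn hnn hη
    have hηint : IsIntegral ℤ η := hη.isIntegral hnn
    have h6 : nn.totient ≤ (minpoly ℤ η).natDegree := hη.totient_le_degree_minpoly
    have h7 : (minpoly ℤ η).natDegree = (minpoly ℚ η).natDegree := by
      have h8 := minpoly.isIntegrallyClosed_eq_field_fractions ℚ K (R := ℤ) (S := K) hηint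
      have h9 : algebraMap K K η = η := rfl
      rw [h9] at h8
      rw [h8, (minpoly.monic hηint).natDegree_map]
    have h10 : (minpoly ℚ η).natDegree ≤ Module.finrank ℚ K := minpoly.natDegree_le η
    have h11 : Module.finrank ℚ K = p - 1 := by
      rw [hK, IntermediateField.adjoin.finrank hξint,
        ← Polynomial.cyclotomic_eq_minpoly_rat hξ hpf.out.pos, natDegree_cyclotomic,
        Nat.totient_prime hpf.out]
    omega
  have hfin : IsOfFinOrder ωK := isOfFinOrder_iff_pow_eq_one.mpr ⟨n, hn0, hωn⟩
  set d := orderOf ωK with hd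
  have hd0 : 0 < d := hfin.orderOf_pos
  have horderξ : orderOf ξK = p := (hξKprim.eq_orderOf).symm
  have horder : ∀ k, k ∣ d → 0 < k → orderOf (ωK ^ (d / k)) = k := by
    intro k hk hk0
    apply Nat.dvd_antisymm
    · apply orderOf_dvd_of_pow_eq_one
      rw [← pow_mul, Nat.div_mul_cancel hk, pow_orderOf_eq_one]
    · set e := orderOf (ωK ^ (d / k)) with he
      have h12 : ωK ^ (d / k * e) = 1 := by
        rw [pow_mul, pow_orderOf_eq_one]
      have h13 : d ∣ d / k * e := orderOf_dvd_of_pow_eq_one h12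
      have h14 : d / k * k ∣ d / k * e := by
        rw [mul_comm (d / k) k, Nat.mul_div_cancel' hk]
        exact h13
      have hdk0 : 0 < d / k := Nat.div_pos (Nat.le_of_dvd hd0 hk) hk0
      exact (Nat.mul_dvd_mul_iff_left hdk0).mp h14
  have hbadcase : ∀ k, k ∣ d → 1 < k → Nat.Coprime k p → (k * p).totient ≤ p - 1 := by
    intro k hk hk1 hco
    have h15 : orderOf (ωK ^ (d / k)) = k := horder k hk (by omega)
    have hcomm : Commute (ωK ^ (d / k)) ξK := mul_comm _ _
    have h16 : orderOf (ωK ^ (d / k) * ξK) = k * p := by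
      rw [Commute.orderOf_mul_eq_mul_orderOf_of_coprime hcomm (by
        rw [h15, horderξ]; exact hco), h15, horderξ]
    have h17 : IsPrimitiveRoot (ωK ^ (d / k) * ξK) (k * p) := by
      have := IsPrimitiveRoot.orderOf (ωK ^ (d / k) * ξK)
      rwa [h16] at this
    exact LK _ _ (Nat.mul_pos (by omega) hpf.out.pos) h17
  have hp1pos : 0 < p - 1 := by have := hpf.out.one_lt; omega
  have no4 : ¬ (4 ∣ d) := by
    intro h4
    have hco : Nat.Coprime 4 p := by
      have h2co : Nat.Coprime 2 p :=
        (Nat.coprime_primes Nat.prime_two hpf.out).mpr (by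
          intro h; rw [← h] at hodd; exact (Nat.not_odd_iff_even.mpr even_two) hodd)
      simpa using h2co.pow_left 2
    have := hbadcase 4 h4 (by norm_num) hco
    rw [Nat.totient_mul hco, (by decide : Nat.totient 4 = 2), Nat.totient_prime hpf.out] at this
    omega
  have nop2 : ¬ (p * p ∣ d) := by
    intro hpp
    have h15 : orderOf (ωK ^ (d / (p * p))) = p * p :=
      horder _ hpp (Nat.mul_pos hpf.out.pos hpf.out.pos)
    have h17 : IsPrimitiveRoot (ωK ^ (d / (p * p))) (p * p) := by
      have := IsPrimitiveRoot.orderOf (ωK ^ (d / (p * p)))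
      rwa [h15] at this
    have h18 := LK _ _ (Nat.mul_pos hpf.out.pos hpf.out.pos) h17
    have h19 : (p * p).totient = p * (p - 1) := by
      have h := Nat.totient_prime_pow hpf.out (show 0 < 2 by norm_num)
      rw [show p ^ 2 = p * p by ring, show (2 - 1 : ℕ) = 1 from rfl, pow_one] at h
      exact h
    rw [h19] at h18
    have h20 : 2 * (p - 1) ≤ p * (p - 1) := Nat.mul_le_mul_right _ hpf.out.two_le
    have := le_trans h20 h18
    omega
  have noq : ∀ r : ℕ, r.Prime → r ∣ d → r = 2 ∨ r = p := by
    intro r hr hrd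
    by_contra hcon
    push_neg at hcon
    obtain ⟨hr2, hrp⟩ := hcon
    have hco : Nat.Coprime r p := (Nat.coprime_primes hr hpf.out).mpr hrp
    have := hbadcase r hrd hr.one_lt hco
    rw [Nat.totient_mul hco, Nat.totient_prime hr, Nat.totient_prime hpf.out] at this
    have hr3 : 3 ≤ r := by
      rcases hr.two_le.lt_or_eq with h | h
      · omega
      · exact absurd h.symm hr2
    have h20 : 2 * (p - 1) ≤ (r - 1) * (p - 1) := Nat.mul_le_mul_right _ (by omega)
    have := le_trans h20 this
    omega
  have hdvd2p : d ∣ 2 * p := by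
    by_contra hnd
    set g := Nat.gcd d (2 * p) with hg
    have hgd : g ∣ d := Nat.gcd_dvd_left _ _
    have hgne : g ≠ d := by
      intro h
      exact hnd (h ▸ Nat.gcd_dvd_right d (2 * p))
    have hdg1 : d / g ≠ 1 := by
      intro h
      apply hgne
      have := Nat.div_mul_cancel hgd
      rw [h, one_mul] at this
      omega
    obtain ⟨r, hr, hrdg⟩ := Nat.exists_prime_and_dvd hdg1
    have hrd : r ∣ d := hrdg.trans (Nat.div_dvd_of_dvd hgd)
    have hrg : r ∣ g := by
      rcases noq r hr hrd with h | h
      · subst h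
        exact Nat.dvd_gcd hrd ⟨p, rfl⟩
      · subst h
        exact Nat.dvd_gcd hrd ⟨2, by ring⟩
    have hr2d : r * r ∣ d := by
      have := mul_dvd_mul hrg hrdg
      rwa [Nat.mul_div_cancel' hgd] at this
    rcases noq r hr hrd with h | h
    · subst h; exact no4 (by simpa using hr2d)
    · subst h; exact nop2 hr2d
  have hω2p : ωK ^ (2 * p) = 1 := orderOf_dvd_iff_pow_eq_one.mp hdvd2p
  -- descend to ℂ
  have hω2pC : ω ^ (2 * p) = 1 := by
    have := congrArg (algebraMap K ℂ) hω2p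
    rw [map_pow, hcoeω, map_one] at this
    exact this
  have hsq : (ω ^ 2) ^ p = 1 := by rw [← pow_mul]; exact hω2pC
  obtain ⟨j, hj, hjeq⟩ := hξ.eq_pow_of_pow_eq_one hsq
  have hωp : ω ^ p = 1 ∨ ω ^ p = -1 := by
    apply mul_self_eq_one_iff.mp
    rw [← pow_add]
    have : p + p = 2 * p := by ring
    rw [this, hω2pC]
  obtain ⟨t, ht⟩ := hodd
  have hp1 : ω ^ (p + 1) = ξ ^ (j * (t + 1)) := by
    have h20 : ω ^ (p + 1) = (ω ^ 2) ^ (t + 1) := by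
      rw [← pow_mul]
      congr 1
      omega
    rw [h20, ← hjeq, ← pow_mul]
  have hppow : ω ^ (p + 1) = ω ^ p * ω := by rw [pow_succ]
  rcases hωp with h | h
  · refine ⟨j * (t + 1), 1, Or.inl rfl, ?_⟩
    have := hp1
    rw [hppow, h, one_mul] at this
    show ω = _
    rw [this]
    norm_num
  · refine ⟨j * (t + 1), -1, Or.inr rfl, ?_⟩
    have := hp1
    rw [hppow, h] at this
    show ω = _
    push_cast
    linear_combination -this

end BentAux


open Polynomial in
/-- value distribution of a bent function `f : 𝔽_{p^m} → 𝔽_p` for `m` even. -/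
theorem stmt_3 (p m : ℕ) [Fact p.Prime] (hp : Odd p) (hm : Even m) (hm0 : 0 < m)
    (F : Type*) [Field F] [Fintype F] [DecidableEq F] [Algebra (ZMod p) F]
    (hF : Fintype.card F = p ^ m)
    (ξ : ℂ) (hξ : IsPrimitiveRoot ξ p)
    (f : F → ZMod p)
    (hbent : ∀ a : F, ‖∑ x : F,
        ξ ^ (f x + Algebra.trace (ZMod p) F (a * x)).val‖ = Real.sqrt (p ^ m)) :
    ∃ (s : ZMod p) (ε : ℤ), (ε = 1 ∨ ε = -1) ∧
      ((univ.filter (fun x : F => f x = s)).card : ℤ)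
        = p ^ (m - 1) + ε * (p - 1) * p ^ (m / 2 - 1) ∧
      ∀ i : ZMod p, i ≠ s →
        ((univ.filter (fun x : F => f x = i)).card : ℤ)
          = p ^ (m - 1) - ε * p ^ (m / 2 - 1) := by
  classical
  have hp2 : p.Prime := Fact.out
  obtain ⟨q, hqq'⟩ := hm
  have hmq : m = 2 * q := by omega
  have hq0 : 0 < q := by omega
  haveI : NeZero p := ⟨hp2.ne_zero⟩
  set N : ZMod p → ℕ := fun i => (univ.filter (fun x : F => f x = i)).card with hN
  set α : ℂ := ∑ x : F, ξ ^ (f x).val with hα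
  have habs : ‖α‖ = Real.sqrt (p ^ m) := by
    have h0 := hbent 0
    simpa using h0
  have hαconj : α * (starRingEnd ℂ) α = (p : ℂ) ^ m := by
    rw [Complex.mul_conj]
    have h1 : Complex.normSq α = (p : ℝ) ^ m := by
      rw [← Complex.sq_norm, habs, Real.sq_sqrt (by positivity)]
    rw [h1]
    push_cast
    ring
  set P : Polynomial ℤ := ∑ i ∈ range p, Polynomial.C ((N (i : ZMod p) : ℤ)) * X ^ i with hP
  have hPeval : aeval ξ P = ∑ i ∈ range p, (N (i : ZMod p) : ℂ) * ξ ^ i := by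
    rw [hP, map_sum]
    apply Finset.sum_congr rfl
    intro i _
    simp
  have hfib : α = ∑ j : ZMod p, (N j : ℂ) * ξ ^ (j.val) := by
    rw [hα, ← Finset.sum_fiberwise univ f (fun x => ξ ^ (f x).val)]
    apply Finset.sum_congr rfl
    intro j _
    rw [Finset.sum_congr rfl (show ∀ x ∈ univ.filter (fun x => f x = j),
      ξ ^ (f x).val = ξ ^ j.val from fun x hx => by rw [(Finset.mem_filter.mp hx).2])]
    rw [Finset.sum_const, nsmul_eq_mul]
  have hreindex : ∑ j : ZMod p, (N j : ℂ) * ξ ^ (j.val) = ∑ i ∈ range p, (N (i : ZMod p) : ℂ) * ξ ^ i := by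
    apply Finset.sum_nbij' (fun j : ZMod p => j.val) (fun i : ℕ => (i : ZMod p))
    · intro a _
      exact Finset.mem_range.mpr a.val_lt
    · intro a _
      exact Finset.mem_univ _
    · intro a _
      exact ZMod.natCast_rightInverse a
    · intro a ha
      rw [ZMod.val_natCast, Nat.mod_eq_of_lt (Finset.mem_range.mp ha)]
    · intro a _
      rw [ZMod.natCast_rightInverse a]
  have hαP : aeval ξ P = α := by rw [hPeval, hfib, hreindex]
  set xB := mkB p P with hxB
  have hxcx : xB * cB p xB = (p : Bq p) ^ (2 * q) := by
    apply evB_injective hξ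
    rw [map_mul, evB_cB hξ, hxB, evB_mk, hαP, hαconj, map_pow, map_natCast, ← hmq]
  obtain ⟨w, hxw, hwcw⟩ := key_div q hq0 xB hxcx
  obtain ⟨s0, ε, hε, hω⟩ := unit_classify hξ hp w hwcw
  set s : ZMod p := (s0 : ZMod p) with hs
  have hξs0 : ξ ^ s0 = ξ ^ s.val := by
    conv_lhs => rw [show s0 = p * (s0 / p) + s0 % p from (Nat.div_add_mod s0 p).symm]
    rw [pow_add, pow_mul, hξ.pow_eq_one, one_pow, one_mul, hs, ZMod.val_natCast]
  have hαfinal : α = (p : ℂ) ^ q * ((ε : ℂ) * ξ ^ s.val) := by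
    have h2 : α = evB hξ xB := by rw [hxB, evB_mk, hαP]
    rw [h2, hxw, map_mul, map_pow, map_natCast, hω, hξs0]
  set Q : Polynomial ℤ := P - Polynomial.C (ε * (p : ℤ) ^ q) * X ^ (s.val) with hQdef
  have hQ0 : aeval ξ Q = 0 := by
    have hc : algebraMap ℤ ℂ (ε * (p : ℤ) ^ q) = (p : ℂ) ^ q * (ε : ℂ) := by
      simp only [algebraMap_int_eq, eq_intCast]
      push_cast
      ring
    rw [hQdef, map_sub, map_mul, aeval_C, map_pow, aeval_X, hαP, hαfinal, hc]
    ring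
  obtain ⟨D, hD⟩ := cyc_dvd hξ Q hQ0
  have hdegP : P.natDegree ≤ p - 1 := by
    apply Polynomial.natDegree_sum_le_of_forall_le
    intro i hi
    refine le_trans (Polynomial.natDegree_C_mul_le _ _) ?_
    rw [Polynomial.natDegree_X_pow]
    have := Finset.mem_range.mp hi
    omega
  have hdegQ : Q.natDegree ≤ p - 1 := by
    refine le_trans (Polynomial.natDegree_sub_le _ _) ?_
    rw [sup_le_iff]
    refine ⟨hdegP, ?_⟩
    refine le_trans (Polynomial.natDegree_C_mul_le _ _) ?_
    rw [Polynomial.natDegree_X_pow]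
    have := s.val_lt
    omega
  have hΦdeg : (cyclotomic p ℤ).natDegree = p - 1 := by
    rw [natDegree_cyclotomic, Nat.totient_prime hp2]
  have hDC : D = Polynomial.C (D.coeff 0) := by
    by_cases hD0 : D = 0
    · rw [hD0]
      simp
    · apply Polynomial.eq_C_of_natDegree_eq_zero
      have h3 := Polynomial.natDegree_mul ((cyclotomic.monic p ℤ).ne_zero) hD0
      rw [← hD, hΦdeg] at h3
      have := hp2.one_lt
      omega
  set e : ℤ := D.coeff 0 with hedef
  have hQcoeff : ∀ n, n < p → Q.coeff n = e := by
    intro n hn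
    rw [hD, hDC, Polynomial.coeff_mul_C]
    have h4 : (cyclotomic p ℤ).coeff n = 1 := by
      rw [Polynomial.cyclotomic_prime, Polynomial.finset_sum_coeff]
      rw [Finset.sum_congr rfl (fun i _ => Polynomial.coeff_X_pow i n)]
      rw [Finset.sum_ite_eq (range p) n (fun _ => (1 : ℤ))]
      simp [Finset.mem_range, hn]
    rw [h4, one_mul]
  have hPcoeff : ∀ n, n < p → P.coeff n = (N (n : ZMod p) : ℤ) := by
    intro n hn
    rw [hP, Polynomial.finset_sum_coeff]
    rw [Finset.sum_congr rfl (fun i (_ : i ∈ range p) => by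
      rw [Polynomial.coeff_C_mul, Polynomial.coeff_X_pow])]
    simp only [mul_ite, mul_one, mul_zero]
    rw [Finset.sum_ite_eq (range p) n (fun i => (N (i : ZMod p) : ℤ))]
    simp [Finset.mem_range, hn]
  have hvals : ∀ i : ZMod p, (N i : ℤ) = e + (if i = s then ε * (p : ℤ) ^ q else 0) := by
    intro i
    have hn := i.val_lt
    have h1 := hQcoeff i.val hn
    rw [hQdef, Polynomial.coeff_sub, hPcoeff i.val hn, Polynomial.coeff_C_mul,
      Polynomial.coeff_X_pow] at h1
    rw [ZMod.natCast_rightInverse i] at h1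
    have hiff : (i.val = s.val) ↔ (i = s) :=
      ⟨fun h => ZMod.val_injective p h, fun h => by rw [h]⟩
    by_cases his : i = s
    · rw [if_pos his]
      rw [if_pos (hiff.mpr his), mul_one] at h1
      linarith
    · rw [if_neg his]
      rw [if_neg (fun hc => his (hiff.mp hc)), mul_zero, sub_zero] at h1
      linarith
  have hsum : ∑ i : ZMod p, (N i : ℤ) = (p : ℤ) ^ m := by
    have h2 : (univ : Finset F).card = ∑ j : ZMod p, N j :=
      Finset.card_eq_sum_card_fiberwise (fun x _ => Finset.mem_univ (f x))
    have h3 : (univ : Finset F).card = p ^ m := by rw [Finset.card_univ, hF]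
    have h5 := congrArg (Nat.cast : ℕ → ℤ) (h2.symm.trans h3)
    push_cast at h5 ⊢
    linarith
  have hsum2 : (p : ℤ) ^ m = p * e + ε * (p : ℤ) ^ q := by
    rw [← hsum, Finset.sum_congr rfl (fun i (_ : i ∈ univ) => hvals i)]
    rw [Finset.sum_add_distrib, Finset.sum_const,
      Finset.sum_ite_eq' univ s (fun _ => ε * (p : ℤ) ^ q)]
    simp only [Finset.mem_univ, if_pos, Finset.card_univ, ZMod.card]
    rw [nsmul_eq_mul]
  have hppos : (0 : ℤ) < p := by exact_mod_cast hp2.pos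
  have hqm : (p : ℤ) ^ m = p * p ^ (m - 1) := by
    rw [← pow_succ']
    congr 1
    omega
  have hqpow : (p : ℤ) ^ q = p * p ^ (q - 1) := by
    rw [← pow_succ']
    congr 1
    omega
  have heval : e = (p : ℤ) ^ (m - 1) - ε * (p : ℤ) ^ (q - 1) := by
    have h5 : (p : ℤ) * e = p * ((p : ℤ) ^ (m - 1) - ε * (p : ℤ) ^ (q - 1)) := by
      rw [mul_sub]
      have h6 := hsum2
      rw [hqm, hqpow] at h6
      linarith
    exact mul_left_cancel₀ (ne_of_gt hppos) h5
  have hm2 : m / 2 = q := by omega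
  refine ⟨s, ε, hε, ?_, ?_⟩
  · have h7 := hvals s
    rw [if_pos rfl] at h7
    have h8 : ((univ.filter (fun x : F => f x = s)).card : ℤ) = (N s : ℤ) := rfl
    rw [h8, h7, heval, hm2, hqpow]
    ring
  · intro i his
    have h7 := hvals i
    rw [if_neg his] at h7
    have h8 : ((univ.filter (fun x : F => f x = i)).card : ℤ) = (N i : ℤ) := rfl
    rw [h8, h7, heval, hm2]
    try ring
end

section
/- With notation as above (p odd prime, q = p^m, Π perfect nonlinear), the set Ω̄ = {c_{a,b,c} : a ≠ 0} has exactly p·q·(q−1) elements, and the free G-action (G = 𝔽_p^*×𝔽_p of order p(p−1)) partitions Ω̄ into exactly p^m(p^m−1)/(p−1) orbits, each of size (p−1)p. -/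
open Finset

/-- The set of codewords `c_{a,b,c}` with `a ≠ 0` of the code `C̄_Π`. -/
def OmegaBar (p : ℕ) [Fact p.Prime] (F : Type*) [Field F] [Fintype F]
    [Algebra (ZMod p) F] (Pl : F → F) : Set (F → ZMod p) :=
  {g | ∃ a b c : F, a ≠ 0 ∧
    g = fun x => Algebra.trace (ZMod p) F (a * Pl x + b * x + c)}

/-- The orbit of a codeword `g` under the action of `G = 𝔽_p^* × 𝔽_p`,
`(α,β)·c_{a,b,c} = c_{αa,αb,αc+β'}`, i.e. `g ↦ α·g + β` pointwise. -/
def codeOrbit (p : ℕ) [Fact p.Prime] (F : Type*) [Field F] [Fintype F]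
    [Algebra (ZMod p) F] (g : F → ZMod p) : Set (F → ZMod p) :=
  {h | ∃ (α β : ZMod p), α ≠ 0 ∧ h = fun x => α * g x + β}

section Aux

variable {p : ℕ} [Fact p.Prime] {F : Type*} [Field F] [Fintype F] [Algebra (ZMod p) F]

lemma myTraceSurj : Function.Surjective (Algebra.trace (ZMod p) F) :=
  Algebra.trace_surjective (ZMod p) F

lemma myTraceNotConst : ∃ z : F, Algebra.trace (ZMod p) F z ≠ 0 := by
  obtain ⟨z, hz⟩ := myTraceSurj (p := p) (F := F) 1
  exact ⟨z, by rw [hz]; exact one_ne_zero⟩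

/-- Key vanishing lemma: a nonzero multiple of a PN function composed with trace,
plus a linear term, cannot be constant. -/
lemma keyA {Pl : F → F}
    (hPN : ∀ a : F, a ≠ 0 → Function.Bijective (fun x : F => Pl (x + a) - Pl x))
    {d e : F} (hd : d ≠ 0) {k : ZMod p}
    (H : ∀ x, Algebra.trace (ZMod p) F (d * Pl x + e * x) = k) : False := by
  have h1 : ∀ x : F, Algebra.trace (ZMod p) F (d * (Pl (x + 1) - Pl x) + e) = 0 := by
    intro x
    have hx1 := H (x + 1)
    have hx0 := H x
    have hsub : Algebra.trace (ZMod p) F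
        ((d * Pl (x + 1) + e * (x + 1)) - (d * Pl x + e * x)) = 0 := by
      rw [map_sub, hx1, hx0, sub_self]
    have harg : (d * Pl (x + 1) + e * (x + 1)) - (d * Pl x + e * x)
        = d * (Pl (x + 1) - Pl x) + e := by ring
    rwa [harg] at hsub
  have h3 : ∀ y : F, Algebra.trace (ZMod p) F (d * y + e) = 0 := by
    intro y
    obtain ⟨x, hx⟩ := (hPN 1 one_ne_zero).2 y
    simpa [hx] using h1 x
  have h4 : ∀ z : F, Algebra.trace (ZMod p) F z = 0 := by
    intro z
    have h5 := h3 (d⁻¹ * (z - e))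
    have : d * (d⁻¹ * (z - e)) + e = z := by field_simp; ring
    rwa [this] at h5
  obtain ⟨z, hz⟩ := myTraceNotConst (p := p) (F := F)
  exact hz (h4 z)

/-- A trace of a linear function that is constant forces the slope and constant to vanish. -/
lemma keyB {e : F} {k : ZMod p}
    (H : ∀ x, Algebra.trace (ZMod p) F (e * x) = k) : e = 0 ∧ k = 0 := by
  have hk : k = 0 := by
    have := H 0
    simpa using this.symm
  subst hk
  refine ⟨?_, rfl⟩
  by_contra he
  obtain ⟨z, hz⟩ := myTraceNotConst (p := p) (F := F)
  have h5 := H (e⁻¹ * z)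
  rw [mul_inv_cancel_left₀ he] at h5
  exact hz h5

/-- Injectivity of the parametrization `(a, b, t) ↦ (x ↦ Tr(aΠx + bx) + t)`. -/
lemma keyC {Pl : F → F}
    (hPN : ∀ a : F, a ≠ 0 → Function.Bijective (fun x : F => Pl (x + a) - Pl x))
    {a a' b b' : F} {t t' : ZMod p} (ha : a ≠ 0) (ha' : a' ≠ 0)
    (H : ∀ x, Algebra.trace (ZMod p) F (a * Pl x + b * x) + t
            = Algebra.trace (ZMod p) F (a' * Pl x + b' * x) + t') :
    a = a' ∧ b = b' ∧ t = t' := by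
  have Hd : ∀ x, Algebra.trace (ZMod p) F ((a - a') * Pl x + (b - b') * x) = t' - t := by
    intro x
    have harg : (a - a') * Pl x + (b - b') * x
        = (a * Pl x + b * x) - (a' * Pl x + b' * x) := by ring
    rw [harg, map_sub]
    have := H x
    have : Algebra.trace (ZMod p) F (a * Pl x + b * x)
        - Algebra.trace (ZMod p) F (a' * Pl x + b' * x) = t' - t := by
      have h := H x
      linear_combination h
    exact this
  have haa : a = a' := by
    by_contra hne
    exact keyA hPN (sub_ne_zero.mpr hne) Hd
  subst haa
  have Hd' : ∀ x : F, Algebra.trace (ZMod p) F ((b - b') * x) = t' - t := by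
    intro x
    have := Hd x
    rwa [sub_self, zero_mul, zero_add] at this
  obtain ⟨hb, ht⟩ := keyB Hd'
  exact ⟨rfl, sub_eq_zero.mp hb, (sub_eq_zero.mp ht).symm⟩

lemma orbit_self (g : F → ZMod p) : g ∈ codeOrbit p F g :=
  ⟨1, 0, one_ne_zero, by funext x; simp⟩

lemma orbit_eq {g h : F → ZMod p} (hh : h ∈ codeOrbit p F g) :
    codeOrbit p F h = codeOrbit p F g := by
  obtain ⟨α, β, hα, rfl⟩ := hh
  ext k
  constructor
  · rintro ⟨α', β', hα', rfl⟩
    exact ⟨α' * α, α' * β + β', mul_ne_zero hα' hα, by funext x; simp; ring⟩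
  · rintro ⟨α', β', hα', rfl⟩
    refine ⟨α' * α⁻¹, β' - α' * α⁻¹ * β, mul_ne_zero hα' (inv_ne_zero hα), ?_⟩
    funext x
    field_simp
    ring

lemma orbit_subset {Pl : F → F} {g h : F → ZMod p}
    (hg : g ∈ OmegaBar p F Pl) (hh : h ∈ codeOrbit p F g) :
    h ∈ OmegaBar p F Pl := by
  obtain ⟨a, b, c, ha, rfl⟩ := hg
  obtain ⟨α, β, hα, rfl⟩ := hh
  obtain ⟨c', hc'⟩ := myTraceSurj (p := p) (F := F) β
  refine ⟨algebraMap (ZMod p) F α * a, algebraMap (ZMod p) F α * b,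
      algebraMap (ZMod p) F α * c + c', ?_, ?_⟩
  · refine mul_ne_zero ?_ ha
    intro h0
    exact hα ((algebraMap (ZMod p) F).injective (by rw [h0, map_zero]))
  · funext x
    rw [← hc', ← smul_eq_mul, ← map_smul, ← map_add]
    congr 1
    rw [Algebra.smul_def]
    ring

end Aux

/-- `Ω̄` has exactly `p·q·(q-1)` elements and the free `G`-action partitions it
into exactly `p^m(p^m-1)/(p-1)` orbits, each of size `(p-1)p`. -/
theorem stmt_8 (p m : ℕ) [Fact p.Prime] (hp : Odd p) (hm : 0 < m)
    (F : Type*) [Field F] [Fintype F] [DecidableEq F] [Algebra (ZMod p) F]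
    (hF : Fintype.card F = p ^ m)
    (Pl : F → F)
    (hPN : ∀ a : F, a ≠ 0 → Function.Bijective (fun x : F => Pl (x + a) - Pl x)) :
    Nat.card (OmegaBar p F Pl) = p * p ^ m * (p ^ m - 1) ∧
    (∀ g ∈ OmegaBar p F Pl, Nat.card (codeOrbit p F g) = (p - 1) * p) ∧
    Nat.card {S : Set (F → ZMod p) | ∃ g ∈ OmegaBar p F Pl, S = codeOrbit p F g}
      = p ^ m * (p ^ m - 1) / (p - 1) := by
  classical
  have hp2 : 2 ≤ p := (Fact.out : p.Prime).two_le
  -- Part 1: cardinality of Ω̄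
  set Φ : {a : F // a ≠ 0} × F × ZMod p → (F → ZMod p) :=
    fun v => fun x => Algebra.trace (ZMod p) F (v.1.1 * Pl x + v.2.1 * x) + v.2.2 with hΦ
  have hΦinj : Function.Injective Φ := by
    rintro ⟨⟨a, ha⟩, b, t⟩ ⟨⟨a', ha'⟩, b', t'⟩ hEq
    have hpt : ∀ x, Algebra.trace (ZMod p) F (a * Pl x + b * x) + t
        = Algebra.trace (ZMod p) F (a' * Pl x + b' * x) + t' := fun x =>
      congrFun hEq x
    obtain ⟨h1, h2, h3⟩ := keyC hPN ha ha' hpt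
    simp only [Prod.mk.injEq, Subtype.mk.injEq]
    exact ⟨h1, h2, h3⟩
  have hrange : OmegaBar p F Pl = Set.range Φ := by
    ext g
    constructor
    · rintro ⟨a, b, c, ha, rfl⟩
      refine ⟨⟨⟨a, ha⟩, b, Algebra.trace (ZMod p) F c⟩, ?_⟩
      funext x
      simp only [hΦ]
      rw [← map_add]
    · rintro ⟨⟨⟨a, ha⟩, b, t⟩, rfl⟩
      obtain ⟨c, hc⟩ := myTraceSurj (p := p) (F := F) t
      refine ⟨a, b, c, ha, ?_⟩
      funext x
      simp only [hΦ]
      rw [← hc, ← map_add]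
  have hcard_ne : Fintype.card {a : F // a ≠ 0} = p ^ m - 1 := by
    have : Fintype.card {a : F // a ≠ 0} = Fintype.card F - 1 := by
      rw [Fintype.card_subtype_compl, Fintype.card_subtype_eq]
    rw [this, hF]
  have part1 : Nat.card (OmegaBar p F Pl) = p * p ^ m * (p ^ m - 1) := by
    rw [hrange, Nat.card_range_of_injective hΦinj, Nat.card_eq_fintype_card,
      Fintype.card_prod, Fintype.card_prod, hcard_ne, hF, ZMod.card]
    have : ∀ A B C : ℕ, A * (B * C) = C * B * A := fun A B C => by ring
    exact this _ _ _
  -- Part 2: orbit sizes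
  have part2 : ∀ g ∈ OmegaBar p F Pl, Nat.card (codeOrbit p F g) = (p - 1) * p := by
    rintro g ⟨a, b, c, ha, rfl⟩
    set g : F → ZMod p := fun x => Algebra.trace (ZMod p) F (a * Pl x + b * x + c) with hg
    have hnc : ∃ u v : F, g u ≠ g v := by
      by_contra hcon
      push_neg at hcon
      apply keyA hPN ha (k := g 0 - Algebra.trace (ZMod p) F c)
      intro x
      have h1 : Algebra.trace (ZMod p) F (a * Pl x + b * x)
          = g x - Algebra.trace (ZMod p) F c := by
        have hgx : g x = Algebra.trace (ZMod p) F (a * Pl x + b * x + c) := rfl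
        rw [hgx]
        simp only [map_add]
        ring
      rw [h1, hcon x 0]
    set Ψ : {α : ZMod p // α ≠ 0} × ZMod p → (F → ZMod p) :=
      fun v => fun x => v.1.1 * g x + v.2 with hΨ
    have hΨinj : Function.Injective Ψ := by
      rintro ⟨⟨α, hα⟩, β⟩ ⟨⟨α', hα'⟩, β'⟩ hEq
      obtain ⟨u, v, huv⟩ := hnc
      have hu := congrFun hEq u
      have hv := congrFun hEq v
      simp only [hΨ] at hu hv
      have hαα : α = α' := by
        have : (α - α') * (g u - g v) = 0 := by linear_combination hu - hv
        rcases mul_eq_zero.mp this with h | h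
        · exact sub_eq_zero.mp h
        · exact absurd (sub_eq_zero.mp h) huv
      subst hαα
      have : β = β' := by linear_combination hu
      simp [this]
    have horb : codeOrbit p F g = Set.range Ψ := by
      ext h
      constructor
      · rintro ⟨α, β, hα, rfl⟩
        exact ⟨⟨⟨α, hα⟩, β⟩, rfl⟩
      · rintro ⟨⟨⟨α, hα⟩, β⟩, rfl⟩
        exact ⟨α, β, hα, rfl⟩
    rw [horb, Nat.card_range_of_injective hΨinj, Nat.card_eq_fintype_card,
      Fintype.card_prod, ZMod.card]
    congr 1
    rw [Fintype.card_subtype_compl, Fintype.card_subtype_eq, ZMod.card]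
  -- Part 3: number of orbits
  refine ⟨part1, part2, ?_⟩
  set f : (F → ZMod p) → Set (F → ZMod p) := codeOrbit p F with hf
  set s : Finset (F → ZMod p) := (OmegaBar p F Pl).toFinset with hs
  set t : Finset (Set (F → ZMod p)) := s.image f with ht
  have hmem : ∀ g ∈ s, f g ∈ t := fun g hg => Finset.mem_image_of_mem f hg
  have hsum := Finset.card_eq_sum_card_fiberwise hmem
  have hfiber : ∀ b ∈ t, (s.filter (fun g => f g = b)).card = (p - 1) * p := by
    intro b hb
    obtain ⟨g₀, hg₀, rfl⟩ := Finset.mem_image.mp hb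
    have hg₀Ω : g₀ ∈ OmegaBar p F Pl := by
      rw [hs] at hg₀
      exact Set.mem_toFinset.mp hg₀
    have hfe : (s.filter (fun g => f g = f g₀)) = (f g₀).toFinset := by
      ext g
      simp only [Finset.mem_filter, hs, Set.mem_toFinset]
      constructor
      · rintro ⟨hgΩ, hfeq⟩
        rw [← hfeq]
        exact orbit_self g
      · intro hgo
        exact ⟨orbit_subset hg₀Ω hgo, orbit_eq hgo⟩
    rw [hfe, Set.toFinset_card, ← Nat.card_eq_fintype_card]
    exact part2 g₀ hg₀Ω
  have hscard : s.card = p * p ^ m * (p ^ m - 1) := by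
    rw [← part1, Nat.card_eq_fintype_card, hs, Set.toFinset_card]
  have hE : t.card * ((p - 1) * p) = p * p ^ m * (p ^ m - 1) := by
    rw [← hscard, hsum, Finset.sum_congr rfl hfiber, Finset.sum_const, smul_eq_mul]
  have hE2 : t.card * (p - 1) = p ^ m * (p ^ m - 1) := by
    have hppos : 0 < p := by omega
    apply Nat.eq_of_mul_eq_mul_right hppos
    calc t.card * (p - 1) * p = t.card * ((p - 1) * p) := by rw [mul_assoc]
      _ = p * p ^ m * (p ^ m - 1) := hE
      _ = p ^ m * (p ^ m - 1) * p := mul_rotate p (p ^ m) (p ^ m - 1)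
  have hset : {S : Set (F → ZMod p) | ∃ g ∈ OmegaBar p F Pl, S = codeOrbit p F g}
      = (↑t : Set (Set (F → ZMod p))) := by
    ext S
    simp only [Set.mem_setOf_eq, ht, hs, Finset.coe_image, Set.mem_image,
      Finset.mem_coe, Set.mem_toFinset, hf]
    constructor
    · rintro ⟨g, hg, rfl⟩
      exact ⟨g, hg, rfl⟩
    · rintro ⟨g, hg, rfl⟩
      exact ⟨g, hg, rfl⟩
  rw [hset, Nat.card_coe_set_eq, Set.ncard_coe_finset]
  exact (Nat.div_eq_of_eq_mul_left (by omega) hE2.symm).symm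
end
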